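/- arXiv:2306.08694 — 3 statements merged into one kernel-verified Lean document; each statement's English description precedes it below -/
import Mathlib

section
/- (Equation (4.1): admissibility of the eigenvector kernel.) Let T be a generic d-tuple of 2×2 complex matrices with σ(T) = {z_1, z_2} ⊆ B_Δ and joint eigenvectors v_1, v_2. Then ‖Δ(T)‖ ≤ 1 if and only if for all vectors ξ_1, ξ_2 ∈ ℂ^r the 2×2 matrix whose (i,j)-entry is ⟨v_i, v_j⟩ · (⟨ξ_i, ξ_j⟩ − ⟨Δ(z_i)ξ_i, Δ(z_j)ξ_j⟩) is positive semidefinite. -/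
open scoped Matrix.Norms.L2Operator ComplexOrder
open Matrix

noncomputable section

open scoped Classical in
/-- Square root of a positive semidefinite matrix (junk value `0` otherwise). -/
def msqrt {n' : Type*} [Fintype n'] [DecidableEq n'] (M : Matrix n' n' ℂ) : Matrix n' n' ℂ :=
  if h : M.PosSemidef then
    (h.1.eigenvectorUnitary : Matrix n' n' ℂ) * diagonal ((↑) ∘ (√·) ∘ h.1.eigenvalues) *
      (star h.1.eigenvectorUnitary : Matrix n' n' ℂ) else 0

/-- The pseudo-distance `d_Δ`. -/
def dDelta {α m' n' : Type*} [Fintype m'] [Fintype n'] [DecidableEq m'] [DecidableEq n']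
    (Δ : α → Matrix m' n' ℂ) (z w : α) : ℝ :=
  ‖(msqrt (1 - Δ w * (Δ w)ᴴ))⁻¹ * ((Δ z - Δ w) *
      ((1 - (Δ w)ᴴ * Δ z)⁻¹ * msqrt (1 - (Δ w)ᴴ * Δ w)))‖

/-- `B_Δ = {z ∈ E : ‖Δ(z)‖ < 1}`. -/
def BDelta {α m' n' : Type*} [Fintype m'] [Fintype n'] [DecidableEq n'] (E : Set α)
    (Δ : α → Matrix m' n' ℂ) : Set α :=
  {z | z ∈ E ∧ ‖Δ z‖ < 1}

/-- pseudo-hyperbolic distance on the unit disk -/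
def dDisk (a b : ℂ) : ℝ := ‖a - b‖ / ‖1 - (starRingEnd ℂ) b * a‖

/-- elementary tensor `ξ ⊗ v` in `ℂ^m ⊗ ℂ^2`, realized as a function on `m × Fin 2` -/
def tpr {m' : Type*} (ξ : m' → ℂ) (v : Fin 2 → ℂ) : m' × Fin 2 → ℂ :=
  fun p => ξ p.1 * v p.2

/-- inner product, conjugate-linear in the second variable -/
def herm {m' : Type*} [Fintype m'] (ξ η : m' → ℂ) : ℂ :=
  ∑ p, ξ p * (starRingEnd ℂ) (η p)

/-- positive semidefiniteness of a `2 × 2` kernel `(a i j)` -/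
def PSD2 (a : Fin 2 → Fin 2 → ℂ) : Prop :=
  ∀ c : Fin 2 → ℂ, 0 ≤ ∑ i, ∑ j, a i j * c i * (starRingEnd ℂ) (c j)

/-- `T` is a generic tuple with joint eigenvectors `v` and joint eigenvalues `z 0 ≠ z 1`. -/
def IsGenericTuple {d : ℕ} (T : Fin d → Matrix (Fin 2) (Fin 2) ℂ)
    (v : Fin 2 → Fin 2 → ℂ) (z : Fin 2 → Fin d → ℂ) : Prop :=
  LinearIndependent ℂ v ∧ z 0 ≠ z 1 ∧ ∀ i j, T i *ᵥ v j = z j i • v j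

/-- `‖Δ(T)‖ ≤ 1`, where `Δ(T)` is the matrix on `ℂ^s ⊗ ℂ^2` determined by
`Δ(T)(e_i ⊗ v_j) = (Δ(z_j) e_i) ⊗ v_j`. -/
def DeltaTContract {β : Type*} {s r : ℕ} (Δ : β → Matrix (Fin s) (Fin r) ℂ)
    (v : Fin 2 → Fin 2 → ℂ) (z : Fin 2 → β) : Prop :=
  ∀ DT : Matrix (Fin s × Fin 2) (Fin r × Fin 2) ℂ,
    (∀ (i : Fin r) (j : Fin 2),
      DT *ᵥ tpr (Pi.single i 1) (v j) = tpr (Δ (z j) *ᵥ Pi.single i 1) (v j)) →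
    ‖DT‖ ≤ 1

/-- membership in the class `S_{2,gen}(B_Δ)` -/
def MemS2gen {d s r : ℕ} (E : Set (Fin d → ℂ)) (Δ : (Fin d → ℂ) → Matrix (Fin s) (Fin r) ℂ)
    (f : (Fin d → ℂ) → ℂ) : Prop :=
  ∀ (T : Fin d → Matrix (Fin 2) (Fin 2) ℂ) (v : Fin 2 → Fin 2 → ℂ) (z : Fin 2 → Fin d → ℂ),
    IsGenericTuple T v z → (∀ j, z j ∈ BDelta E Δ) → DeltaTContract Δ v z →
    ∀ fT : Matrix (Fin 2) (Fin 2) ℂ, (∀ j, fT *ᵥ v j = f (z j) • v j) → ‖fT‖ ≤ 1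

/-- the Möbius pseudo-distance of a domain `Ω` -/
def dMobius {α : Type*} [NormedAddCommGroup α] [NormedSpace ℂ α] (Ω : Set α) (z w : α) : ℝ :=
  sSup {x | ∃ g : α → ℂ, DifferentiableOn ℂ g Ω ∧ (∀ ζ ∈ Ω, ‖g ζ‖ < 1) ∧ x = dDisk (g z) (g w)}

/-- `Ω` is a complete spectral domain for the diagonalizable tuple with eigenvectors `v` and
joint eigenvalues `z 0, z 1`. -/
def IsCompleteSpectralDomainFor {α : Type*} [NormedAddCommGroup α] [NormedSpace ℂ α]
    (Ω : Set α) (v : Fin 2 → Fin 2 → ℂ) (z : Fin 2 → α) : Prop :=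
  ∀ (n : ℕ) (F : α → Matrix (Fin n) (Fin n) ℂ),
    (∀ i j, DifferentiableOn ℂ (fun ζ => F ζ i j) Ω) →
    ∀ C : ℝ, (∀ ζ ∈ Ω, ‖F ζ‖ ≤ C) →
    ∀ FT : Matrix (Fin n × Fin 2) (Fin n × Fin 2) ℂ,
      (∀ (ξ : Fin n → ℂ) (j : Fin 2), FT *ᵥ tpr ξ (v j) = tpr (F (z j) *ᵥ ξ) (v j)) →
      ‖FT‖ ≤ C

lemma herm_tpr {m' : Type*} [Fintype m'] (ξ η : m' → ℂ) (w u : Fin 2 → ℂ) :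
    herm (tpr ξ w) (tpr η u) = herm ξ η * herm w u := by
  simp only [herm, tpr, Fintype.sum_prod_type, _root_.map_mul]
  rw [Finset.sum_mul_sum]
  exact Finset.sum_congr rfl fun i _ => Finset.sum_congr rfl fun j _ => by ring

lemma herm_add_left {m' : Type*} [Fintype m'] (a b c : m' → ℂ) :
    herm (a + b) c = herm a c + herm b c := by
  simp [herm, add_mul, Finset.sum_add_distrib]

lemma herm_add_right {m' : Type*} [Fintype m'] (a b c : m' → ℂ) :
    herm a (b + c) = herm a b + herm a c := by
  simp [herm, mul_add, Finset.sum_add_distrib]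

lemma herm_smul {m' : Type*} [Fintype m'] (a b : ℂ) (x y : m' → ℂ) :
    herm (a • x) (b • y) = a * (starRingEnd ℂ) b * herm x y := by
  simp only [herm, Pi.smul_apply, smul_eq_mul, _root_.map_mul, Finset.mul_sum]
  exact Finset.sum_congr rfl fun p _ => by ring

lemma herm_self {m' : Type*} [Fintype m'] (x : m' → ℂ) :
    herm x x = ((‖(WithLp.equiv 2 (m' → ℂ)).symm x‖ ^ 2 : ℝ) : ℂ) := by
  have h1 : ‖(WithLp.equiv 2 (m' → ℂ)).symm x‖ ^ 2 = ∑ p, ‖x p‖ ^ 2 := by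
    rw [EuclideanSpace.norm_eq, Real.sq_sqrt (Finset.sum_nonneg fun p _ => sq_nonneg _)]
    rfl
  rw [h1]
  push_cast
  simp only [herm, Complex.mul_conj]
  exact Finset.sum_congr rfl fun p _ => by
    rw [Complex.normSq_eq_norm_sq]; push_cast; ring

lemma norm_le_one_iff_mulVec {m' n' : Type*} [Fintype m'] [Fintype n'] [DecidableEq n']
    (A : Matrix m' n' ℂ) :
    ‖A‖ ≤ 1 ↔ ∀ x : n' → ℂ,
      ‖(WithLp.equiv 2 (m' → ℂ)).symm (A *ᵥ x)‖ ≤ ‖(WithLp.equiv 2 (n' → ℂ)).symm x‖ := by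
  constructor
  · intro h x
    have h2 := Matrix.l2_opNorm_mulVec A ((WithLp.equiv 2 (n' → ℂ)).symm x)
    calc ‖(WithLp.equiv 2 (m' → ℂ)).symm (A *ᵥ x)‖
        ≤ ‖A‖ * ‖(WithLp.equiv 2 (n' → ℂ)).symm x‖ := h2
      _ ≤ 1 * ‖(WithLp.equiv 2 (n' → ℂ)).symm x‖ :=
          mul_le_mul_of_nonneg_right h (norm_nonneg _)
      _ = _ := one_mul _
  · intro h
    rw [Matrix.l2_opNorm_def]
    refine ContinuousLinearMap.opNorm_le_bound _ zero_le_one fun x => ?_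
    rw [one_mul]
    exact h ((WithLp.equiv 2 (n' → ℂ)) x)


/-- **Equation (4.1)**: admissibility of the eigenvector kernel: `‖Δ(T)‖ ≤ 1` iff the kernel
`(⟨v_i, v_j⟩ (⟨ξ_i, ξ_j⟩ − ⟨Δ(z_i)ξ_i, Δ(z_j)ξ_j⟩))_{i,j}` is positive semidefinite for all
`ξ_1, ξ_2 ∈ ℂ^r`. -/
theorem deltaTContract_iff_kernel {d s r : ℕ} (E : Set (Fin d → ℂ))
    (Δ : (Fin d → ℂ) → Matrix (Fin s) (Fin r) ℂ)
    (T : Fin d → Matrix (Fin 2) (Fin 2) ℂ) (v : Fin 2 → Fin 2 → ℂ)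
    (zz : Fin 2 → Fin d → ℂ)
    (hT : IsGenericTuple T v zz) (hzz : ∀ j, zz j ∈ BDelta E Δ) :
    DeltaTContract Δ v zz ↔
      ∀ ξ : Fin 2 → (Fin r → ℂ),
        PSD2 fun i j => herm (v i) (v j) *
          (herm (ξ i) (ξ j) - herm (Δ (zz i) *ᵥ ξ i) (Δ (zz j) *ᵥ ξ j)) := by
  obtain ⟨hli, -, -⟩ := hT
  set M : Matrix (Fin 2) (Fin 2) ℂ := Matrix.of v with hMdef
  have hMu : IsUnit M := Matrix.linearIndependent_rows_iff_isUnit.mp (by exact hli)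
  have hdet : IsUnit M.det := (Matrix.isUnit_iff_isUnit_det M).mp hMu
  set N : Matrix (Fin 2) (Fin 2) ℂ := M⁻¹ with hNdef
  have hMN : M * N = 1 := Matrix.mul_nonsing_inv M hdet
  have hNM : N * M = 1 := Matrix.nonsing_inv_mul M hdet
  have h1 : ∀ k j, v k 0 * N 0 j + v k 1 * N 1 j = if k = j then (1:ℂ) else 0 := by
    intro k j
    have h := congrFun (congrFun hMN k) j
    simpa [Matrix.mul_apply, Fin.sum_univ_two, Matrix.one_apply, hMdef] using h
  have h2 : ∀ a b, N a 0 * v 0 b + N a 1 * v 1 b = if a = b then (1:ℂ) else 0 := by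
    intro a b
    have h := congrFun (congrFun hNM a) b
    simpa [Matrix.mul_apply, Fin.sum_univ_two, Matrix.one_apply, hMdef] using h
  set DT0 : Matrix (Fin s × Fin 2) (Fin r × Fin 2) ℂ :=
    Matrix.of (fun p q => ∑ j, Δ (zz j) p.1 q.1 * (v j p.2 * N q.2 j)) with hDT0
  have hact : ∀ (ξ : Fin r → ℂ) (k : Fin 2),
      DT0 *ᵥ tpr ξ (v k) = tpr (Δ (zz k) *ᵥ ξ) (v k) := by
    intro ξ k
    funext p
    show (∑ q : Fin r × Fin 2,
        (∑ j, Δ (zz j) p.1 q.1 * (v j p.2 * N q.2 j)) * (ξ q.1 * v k q.2))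
        = (∑ q1, Δ (zz k) p.1 q1 * ξ q1) * v k p.2
    rw [Fintype.sum_prod_type, Finset.sum_mul]
    refine Finset.sum_congr rfl fun q1 _ => ?_
    simp only [Fin.sum_univ_two]
    fin_cases k <;> simp only [Fin.zero_eta, Fin.mk_one]
    · have hk0 : v 0 0 * N 0 0 + v 0 1 * N 1 0 = 1 := by simpa using h1 0 0
      have hk1 : v 0 0 * N 0 1 + v 0 1 * N 1 1 = 0 := by simpa using h1 0 1
      linear_combination (Δ (zz 0) p.1 q1 * ξ q1 * v 0 p.2) * hk0
        + (Δ (zz 1) p.1 q1 * ξ q1 * v 1 p.2) * hk1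
    · have hk0 : v 1 0 * N 0 0 + v 1 1 * N 1 0 = 0 := by simpa using h1 1 0
      have hk1 : v 1 0 * N 0 1 + v 1 1 * N 1 1 = 1 := by simpa using h1 1 1
      linear_combination (Δ (zz 0) p.1 q1 * ξ q1 * v 0 p.2) * hk0
        + (Δ (zz 1) p.1 q1 * ξ q1 * v 1 p.2) * hk1
  have hsingle : ∀ (q1 : Fin r) (q2 : Fin 2),
      (Pi.single (q1, q2) 1 : Fin r × Fin 2 → ℂ)
        = N q2 0 • tpr (Pi.single q1 1) (v 0) + N q2 1 • tpr (Pi.single q1 1) (v 1) := by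
    intro q1 q2
    funext p
    obtain ⟨p1, p2⟩ := p
    have hL : (Pi.single (q1, q2) (1:ℂ) : Fin r × Fin 2 → ℂ) (p1, p2)
        = (if p1 = q1 then (1:ℂ) else 0) * (if p2 = q2 then 1 else 0) := by
      rw [Pi.single_apply]
      by_cases h : p1 = q1 <;> by_cases h' : p2 = q2 <;> simp [Prod.ext_iff, h, h']
    rw [hL]
    simp only [Pi.add_apply, Pi.smul_apply, smul_eq_mul, tpr, Pi.single_apply]
    have hh := h2 q2 p2
    by_cases h : p1 = q1
    · rw [if_pos h]
      by_cases h' : p2 = q2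
      · rw [if_pos h']
        rw [if_pos h'.symm] at hh
        linear_combination -hh
      · rw [if_neg h']
        rw [if_neg (fun hcon => h' (hcon.symm))] at hh
        linear_combination -hh
    · simp [h]
  have huniq : ∀ DT : Matrix (Fin s × Fin 2) (Fin r × Fin 2) ℂ,
      (∀ (i : Fin r) (j : Fin 2),
        DT *ᵥ tpr (Pi.single i 1) (v j) = tpr (Δ (zz j) *ᵥ Pi.single i 1) (v j)) → DT = DT0 := by
    intro DT hDT
    ext p q
    have e1 : DT *ᵥ Pi.single q 1 = DT0 *ᵥ Pi.single q 1 := by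
      obtain ⟨q1, q2⟩ := q
      rw [hsingle q1 q2]
      simp only [Matrix.mulVec_add, Matrix.mulVec_smul]
      rw [hDT q1 0, hDT q1 1, hact (Pi.single q1 1) 0, hact (Pi.single q1 1) 1]
    have := congrFun e1 p
    simpa using this
  have hdecomp : ∀ y : Fin r × Fin 2 → ℂ, ∃ ξ : Fin 2 → Fin r → ℂ,
      y = tpr (ξ 0) (v 0) + tpr (ξ 1) (v 1) := by
    intro y
    refine ⟨fun j q1 => ∑ a, y (q1, a) * N a j, ?_⟩
    funext p
    obtain ⟨p1, p2⟩ := p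
    simp only [Pi.add_apply, tpr, Fin.sum_univ_two]
    fin_cases p2 <;> simp only [Fin.zero_eta, Fin.mk_one]
    · have hA : N 0 0 * v 0 0 + N 0 1 * v 1 0 = 1 := by simpa using h2 0 0
      have hB : N 1 0 * v 0 0 + N 1 1 * v 1 0 = 0 := by simpa using h2 1 0
      linear_combination (-(y (p1, 0))) * hA + (-(y (p1, 1))) * hB
    · have hA : N 0 0 * v 0 1 + N 0 1 * v 1 1 = 0 := by simpa using h2 0 1
      have hB : N 1 0 * v 0 1 + N 1 1 * v 1 1 = 1 := by simpa using h2 1 1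
      linear_combination (-(y (p1, 0))) * hA + (-(y (p1, 1))) * hB
  have hDT0sat : ∀ (i : Fin r) (j : Fin 2), DT0 *ᵥ tpr (Pi.single i 1) (v j)
      = tpr (Δ (zz j) *ᵥ Pi.single i 1) (v j) := fun i j => hact _ j
  have hkey : ∀ ξ : Fin 2 → Fin r → ℂ, ∀ c : Fin 2 → ℂ,
      (∑ i, ∑ j, (herm (v i) (v j) * (herm (ξ i) (ξ j)
          - herm (Δ (zz i) *ᵥ ξ i) (Δ (zz j) *ᵥ ξ j))) * c i * (starRingEnd ℂ) (c j))
        = herm (tpr (c 0 • ξ 0) (v 0) + tpr (c 1 • ξ 1) (v 1))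
            (tpr (c 0 • ξ 0) (v 0) + tpr (c 1 • ξ 1) (v 1))
          - herm (DT0 *ᵥ (tpr (c 0 • ξ 0) (v 0) + tpr (c 1 • ξ 1) (v 1)))
              (DT0 *ᵥ (tpr (c 0 • ξ 0) (v 0) + tpr (c 1 • ξ 1) (v 1))) := by
    intro ξ c
    rw [Matrix.mulVec_add, hact, hact]
    simp only [Fin.sum_univ_two, herm_add_left, herm_add_right, herm_tpr,
      Matrix.mulVec_smul, herm_smul]
    ring
  constructor
  · intro hC ξ c
    have hn : ‖DT0‖ ≤ 1 := hC DT0 hDT0sat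
    have hnorm := (norm_le_one_iff_mulVec DT0).mp hn
      (tpr (c 0 • ξ 0) (v 0) + tpr (c 1 • ξ 1) (v 1))
    simp only
    rw [hkey ξ c, herm_self, herm_self, ← Complex.ofReal_sub]
    rw [Complex.zero_le_real]
    have h3 := norm_nonneg ((WithLp.equiv 2 (Fin s × Fin 2 → ℂ)).symm
      (DT0 *ᵥ (tpr (c 0 • ξ 0) (v 0) + tpr (c 1 • ξ 1) (v 1))))
    nlinarith [hnorm]
  · intro hK DT hDT
    rw [huniq DT hDT, norm_le_one_iff_mulVec]
    intro x
    obtain ⟨ξ, hx⟩ := hdecomp x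
    have hk := hK ξ (fun _ => 1)
    simp only [_root_.map_one, mul_one] at hk
    have := hkey ξ (fun _ => 1)
    simp only [_root_.map_one, mul_one, one_smul] at this
    rw [this] at hk
    rw [hx]
    rw [herm_self, herm_self, ← Complex.ofReal_sub, Complex.zero_le_real] at hk
    have ha := norm_nonneg ((WithLp.equiv 2 (Fin r × Fin 2 → ℂ)).symm
      (tpr (ξ 0) (v 0) + tpr (ξ 1) (v 1)))
    have hb := norm_nonneg ((WithLp.equiv 2 (Fin s × Fin 2 → ℂ)).symm
      (DT0 *ᵥ (tpr (ξ 0) (v 0) + tpr (ξ 1) (v 1))))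
    nlinarith [hk]
end
end

section
/- (Harris-type matrix Möbius contraction lemma, used in the proof of Proposition 5.1.) Let A and B be s×r complex matrices with ‖A‖ ≤ 1 and ‖B‖ < 1 (operator norms). Then I − B*A and I − A*B are invertible, the matrix G := (I − BB*)^{−1/2} (A − B) (I − B*A)^{−1} (I − B*B)^{1/2} satisfies I − G*G = (I − B*B)^{1/2} (I − A*B)^{−1} (I − A*A) (I − B*A)^{−1} (I − B*B)^{1/2}, this matrix is positive semidefinite, and consequently ‖G‖ ≤ 1. -/
open scoped Matrix.Norms.L2Operator ComplexOrder
open Matrix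

noncomputable section

section HarrisAux

variable {m n : ℕ}

lemma msqrt_spec {n' : Type*} [Fintype n'] [DecidableEq n'] {M : Matrix n' n' ℂ}
    (h : M.PosSemidef) : msqrt M * msqrt M = M ∧ (msqrt M)ᴴ = msqrt M := by
  have e : msqrt M = (h.1.eigenvectorUnitary : Matrix n' n' ℂ) *
      diagonal ((↑) ∘ (√·) ∘ h.1.eigenvalues) * (star h.1.eigenvectorUnitary : Matrix n' n' ℂ) := by
    rw [msqrt, dif_pos h]
  have hU : (star h.1.eigenvectorUnitary : Matrix n' n' ℂ) * (h.1.eigenvectorUnitary : Matrix n' n' ℂ) = 1 :=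
    Unitary.coe_star_mul_self _
  have hD : diagonal (((↑) ∘ (√·) ∘ h.1.eigenvalues : n' → ℂ)) *
      diagonal ((↑) ∘ (√·) ∘ h.1.eigenvalues) = diagonal (RCLike.ofReal ∘ h.1.eigenvalues) := by
    rw [diagonal_mul_diagonal]
    congr 1
    funext i
    simp only [Function.comp_apply]
    rw [← Complex.ofReal_mul, Real.mul_self_sqrt (h.eigenvalues_nonneg i)]
    rfl
  constructor
  · rw [e]
    conv_rhs => rw [h.1.spectral_theorem, Unitary.conjStarAlgAut_apply]
    rw [← hD]
    simp only [Matrix.mul_assoc]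
    rw [← Matrix.mul_assoc (star h.1.eigenvectorUnitary : Matrix n' n' ℂ), hU, Matrix.one_mul]
  · rw [e]
    simp only [Matrix.conjTranspose_mul, Matrix.diagonal_conjTranspose, Matrix.mul_assoc]
    have hd : star (((↑) ∘ (√·) ∘ h.1.eigenvalues : n' → ℂ)) = ((↑) ∘ (√·) ∘ h.1.eigenvalues) := by
      funext i
      simp
    rw [hd, ← Matrix.star_eq_conjTranspose, ← Matrix.star_eq_conjTranspose,
      star_star]

lemma dot_one_sub_conjTranspose_mul (M : Matrix (Fin m) (Fin n) ℂ) (x : Fin n → ℂ) :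
    star x ⬝ᵥ ((1 - Mᴴ * M) *ᵥ x) =
      ((‖(WithLp.equiv 2 (Fin n → ℂ)).symm x‖ ^ 2
        - ‖(WithLp.equiv 2 (Fin m → ℂ)).symm (M *ᵥ x)‖ ^ 2 : ℝ) : ℂ) := by
  rw [Matrix.sub_mulVec, dotProduct_sub, Matrix.one_mulVec,
    ← Matrix.mulVec_mulVec, Matrix.dotProduct_mulVec, ← Matrix.star_mulVec,
    ]
  have hsq : ∀ {k : ℕ} (y : Fin k → ℂ),
      star y ⬝ᵥ y = ((‖(WithLp.equiv 2 (Fin k → ℂ)).symm y‖ ^ 2 : ℝ) : ℂ) := fun {k} y => by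
    have := inner_self_eq_norm_sq_to_K (𝕜 := ℂ) ((WithLp.equiv 2 (Fin k → ℂ)).symm y)
    rw [dotProduct_comm]
    push_cast
    exact this
  rw [hsq x, hsq (M *ᵥ x)]
  norm_cast


lemma posSemidef_one_sub_of_norm_le (M : Matrix (Fin m) (Fin n) ℂ) (h : ‖M‖ ≤ 1) :
    (1 - Mᴴ * M).PosSemidef := by
  refine PosSemidef.of_dotProduct_mulVec_nonneg
    ((Matrix.isHermitian_one).sub (Matrix.isHermitian_conjTranspose_mul_self M)) fun x => ?_
  rw [dot_one_sub_conjTranspose_mul, Complex.zero_le_real]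
  have h1 : ‖(WithLp.equiv 2 (Fin m → ℂ)).symm (M *ᵥ x)‖
      ≤ ‖M‖ * ‖(WithLp.equiv 2 (Fin n → ℂ)).symm x‖ :=
    M.l2_opNorm_mulVec ((WithLp.equiv 2 (Fin n → ℂ)).symm x)
  have h4 : ‖(WithLp.equiv 2 (Fin m → ℂ)).symm (M *ᵥ x)‖
      ≤ ‖(WithLp.equiv 2 (Fin n → ℂ)).symm x‖ :=
    h1.trans (mul_le_of_le_one_left (norm_nonneg _) h)
  have := pow_le_pow_left₀ (norm_nonneg _) h4 2
  linarith

lemma posDef_one_sub_of_norm_lt (M : Matrix (Fin m) (Fin n) ℂ) (h : ‖M‖ < 1) :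
    (1 - Mᴴ * M).PosDef := by
  refine PosDef.of_dotProduct_mulVec_pos
    ((Matrix.isHermitian_one).sub (Matrix.isHermitian_conjTranspose_mul_self M)) fun x hx => ?_
  rw [dot_one_sub_conjTranspose_mul, Complex.zero_lt_real]
  have h1 : ‖(WithLp.equiv 2 (Fin m → ℂ)).symm (M *ᵥ x)‖
      ≤ ‖M‖ * ‖(WithLp.equiv 2 (Fin n → ℂ)).symm x‖ :=
    M.l2_opNorm_mulVec ((WithLp.equiv 2 (Fin n → ℂ)).symm x)
  have hx' : (0:ℝ) < ‖(WithLp.equiv 2 (Fin n → ℂ)).symm x‖ := by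
    rw [norm_pos_iff]
    exact fun hc => hx ((WithLp.equiv 2 (Fin n → ℂ)).symm.injective (by simp [hc]))
  have h4 : ‖(WithLp.equiv 2 (Fin m → ℂ)).symm (M *ᵥ x)‖
      < ‖(WithLp.equiv 2 (Fin n → ℂ)).symm x‖ :=
    h1.trans_lt (by nlinarith)
  have := pow_lt_pow_left₀ h4 (norm_nonneg _) two_ne_zero
  linarith

lemma l2_opNorm_le_one_of_posSemidef (M : Matrix (Fin m) (Fin n) ℂ)
    (h : (1 - Mᴴ * M).PosSemidef) : ‖M‖ ≤ 1 := by
  rw [Matrix.l2_opNorm_def]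
  refine ContinuousLinearMap.opNorm_le_bound _ zero_le_one fun x => ?_
  rw [one_mul]
  obtain ⟨x₀, rfl⟩ := (WithLp.equiv 2 (Fin n → ℂ)).symm.surjective x
  have h2 := h.dotProduct_mulVec_nonneg x₀
  rw [dot_one_sub_conjTranspose_mul, Complex.zero_le_real, sub_nonneg] at h2
  have e : ((Matrix.toEuclideanLin.trans LinearMap.toContinuousLinearMap) M)
      ((WithLp.equiv 2 (Fin n → ℂ)).symm x₀) = (WithLp.equiv 2 (Fin m → ℂ)).symm (M *ᵥ x₀) := rfl
  rw [e]
  have h3 := Real.sqrt_le_sqrt h2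
  rwa [Real.sqrt_sq (norm_nonneg _), Real.sqrt_sq (norm_nonneg _)] at h3

lemma assemble {r' s' : Type*} [Fintype r'] [Fintype s'] [DecidableEq r'] [DecidableEq s']
    (S X W V Y C : Matrix r' r' ℂ) (K : Matrix r' s' ℂ) (F : Matrix s' r' ℂ) (D : Matrix s' s' ℂ)
    (hXW : ∀ z : Matrix r' r' ℂ, X * (W * z) = z)
    (hVY : V * (Y * S) = S)
    (hSCS : S * (C * S) = 1) :
    1 - S * (X * (K * (D * (F * (Y * S))))) = S * (X * ((W * (C * V) - K * (D * F)) * (Y * S))) := by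
  have t1 : S * (X * ((W * (C * V)) * (Y * S))) = 1 := by
    rw [Matrix.mul_assoc W, Matrix.mul_assoc C, hVY, hXW, hSCS]
  have t2 : S * (X * ((K * (D * F)) * (Y * S))) = S * (X * (K * (D * (F * (Y * S))))) := by
    rw [Matrix.mul_assoc K, Matrix.mul_assoc D]
  rw [Matrix.sub_mul, Matrix.mul_sub, Matrix.mul_sub, t1, t2]

lemma key_identity {s r : ℕ} (A B : Matrix (Fin s) (Fin r) ℂ)
    (hPd : IsUnit (1 - Bᴴ * B).det) :
    (1 : Matrix (Fin r) (Fin r) ℂ) - Aᴴ * A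
      = (1 - Aᴴ * B) * ((1 - Bᴴ * B)⁻¹ * (1 - Bᴴ * A))
        - (Aᴴ - Bᴴ) * ((1 - B * Bᴴ)⁻¹ * (A - B)) := by
  have hPC : (1 - Bᴴ * B) * (1 - Bᴴ * B)⁻¹ = 1 := Matrix.mul_nonsing_inv _ hPd
  have hCP : (1 - Bᴴ * B)⁻¹ * (1 - Bᴴ * B) = 1 := Matrix.nonsing_inv_mul _ hPd
  have hu0 : (1 - Bᴴ * B)⁻¹ * (Bᴴ * B) = (1 - Bᴴ * B)⁻¹ - 1 := by
    calc (1 - Bᴴ * B)⁻¹ * (Bᴴ * B)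
        = (1 - Bᴴ * B)⁻¹ - (1 - Bᴴ * B)⁻¹ * (1 - Bᴴ * B) := by
          rw [Matrix.mul_sub, Matrix.mul_one]; abel
      _ = (1 - Bᴴ * B)⁻¹ - 1 := by rw [hCP]
  have hv0 : (Bᴴ * B) * (1 - Bᴴ * B)⁻¹ = (1 - Bᴴ * B)⁻¹ - 1 := by
    calc (Bᴴ * B) * (1 - Bᴴ * B)⁻¹
        = (1 - Bᴴ * B)⁻¹ - (1 - Bᴴ * B) * (1 - Bᴴ * B)⁻¹ := by
          rw [Matrix.sub_mul, Matrix.one_mul]; abel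
      _ = (1 - Bᴴ * B)⁻¹ - 1 := by rw [hPC]
  have hv0' : ∀ (k : ℕ) (z : Matrix (Fin r) (Fin k) ℂ),
      Bᴴ * (B * ((1 - Bᴴ * B)⁻¹ * z)) = (1 - Bᴴ * B)⁻¹ * z - z := by
    intro k z
    rw [← Matrix.mul_assoc, ← Matrix.mul_assoc, hv0, Matrix.sub_mul, Matrix.one_mul]
  have hv0'' : Bᴴ * (B * (1 - Bᴴ * B)⁻¹) = (1 - Bᴴ * B)⁻¹ - 1 := by
    rw [← Matrix.mul_assoc, hv0]
  have hD : (1 - B * Bᴴ)⁻¹ = 1 + B * ((1 - Bᴴ * B)⁻¹ * Bᴴ) := by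
    apply Matrix.inv_eq_right_inv
    simp only [Matrix.mul_add, Matrix.add_mul, Matrix.mul_sub, Matrix.sub_mul,
      Matrix.mul_one, Matrix.one_mul, Matrix.mul_assoc, hv0']
    abel
  rw [hD]
  simp only [Matrix.mul_add, Matrix.add_mul, Matrix.mul_sub, Matrix.sub_mul,
    Matrix.mul_one, Matrix.one_mul, Matrix.mul_assoc, hu0, hv0', hv0'']
  abel

end HarrisAux

/-- **Harris-type matrix Möbius contraction lemma** used in the proof of Proposition 5.1. -/
theorem harris_moebius_contraction {s r : ℕ} (A B : Matrix (Fin s) (Fin r) ℂ)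
    (hA : ‖A‖ ≤ 1) (hB : ‖B‖ < 1)
    (G : Matrix (Fin s) (Fin r) ℂ)
    (hG : G = (msqrt (1 - B * Bᴴ))⁻¹ * ((A - B) * ((1 - Bᴴ * A)⁻¹ * msqrt (1 - Bᴴ * B)))) :
    IsUnit (1 - Bᴴ * A) ∧ IsUnit (1 - Aᴴ * B) ∧
    1 - Gᴴ * G =
      msqrt (1 - Bᴴ * B) *
        ((1 - Aᴴ * B)⁻¹ * ((1 - Aᴴ * A) * ((1 - Bᴴ * A)⁻¹ * msqrt (1 - Bᴴ * B)))) ∧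
    (msqrt (1 - Bᴴ * B) *
        ((1 - Aᴴ * B)⁻¹ * ((1 - Aᴴ * A) * ((1 - Bᴴ * A)⁻¹ * msqrt (1 - Bᴴ * B))))).PosSemidef ∧
    ‖G‖ ≤ 1 := by
  have hBA : ‖Bᴴ * A‖ < 1 := by
    calc ‖Bᴴ * A‖ ≤ ‖Bᴴ‖ * ‖A‖ := Matrix.l2_opNorm_mul _ _
    _ = ‖B‖ * ‖A‖ := by rw [Matrix.l2_opNorm_conjTranspose]
    _ < 1 := by nlinarith [norm_nonneg B, norm_nonneg A]
  have hAB : ‖Aᴴ * B‖ < 1 := by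
    calc ‖Aᴴ * B‖ ≤ ‖Aᴴ‖ * ‖B‖ := Matrix.l2_opNorm_mul _ _
    _ = ‖A‖ * ‖B‖ := by rw [Matrix.l2_opNorm_conjTranspose]
    _ < 1 := by nlinarith [norm_nonneg B, norm_nonneg A]
  have hIBA : IsUnit (1 - Bᴴ * A) := (Units.oneSub _ hBA).isUnit
  have hIAB : IsUnit (1 - Aᴴ * B) := (Units.oneSub _ hAB).isUnit
  have hIBAd : IsUnit (1 - Bᴴ * A).det := (Matrix.isUnit_iff_isUnit_det _).mp hIBA
  have hIABd : IsUnit (1 - Aᴴ * B).det := (Matrix.isUnit_iff_isUnit_det _).mp hIAB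
  have hP : (1 - Bᴴ * B).PosDef := posDef_one_sub_of_norm_lt B hB
  have hQ : (1 - B * Bᴴ).PosDef := by
    have := posDef_one_sub_of_norm_lt Bᴴ (by rwa [Matrix.l2_opNorm_conjTranspose])
    simpa using this
  have hPd : IsUnit (1 - Bᴴ * B).det := (Matrix.isUnit_iff_isUnit_det _).mp hP.isUnit
  set S := msqrt (1 - Bᴴ * B) with hSdef
  set T := msqrt (1 - B * Bᴴ) with hTdef
  have hS2 : S * S = 1 - Bᴴ * B := (msqrt_spec hP.posSemidef).1
  have hT2 : T * T = 1 - B * Bᴴ := (msqrt_spec hQ.posSemidef).1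
  have hSH : Sᴴ = S := (msqrt_spec hP.posSemidef).2
  have hTH : Tᴴ = T := (msqrt_spec hQ.posSemidef).2
  have hSd : IsUnit S.det := by
    have e : S.det * S.det = (1 - Bᴴ * B).det := by rw [← Matrix.det_mul, hS2]
    exact isUnit_of_mul_isUnit_left (e ▸ hPd)
  have hTT : (1 - B * Bᴴ)⁻¹ = T⁻¹ * T⁻¹ := by rw [← hT2, Matrix.mul_inv_rev]
  have hTinvH : (T⁻¹)ᴴ = T⁻¹ := by rw [Matrix.conjTranspose_nonsing_inv, hTH]
  have hXI : ∀ z : Matrix (Fin r) (Fin r) ℂ,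
      (1 - Aᴴ * B)⁻¹ * ((1 - Aᴴ * B) * z) = z := fun z => by
    rw [← Matrix.mul_assoc, Matrix.nonsing_inv_mul _ hIABd, Matrix.one_mul]
  have hYS : (1 - Bᴴ * A) * ((1 - Bᴴ * A)⁻¹ * S) = S := by
    rw [← Matrix.mul_assoc, Matrix.mul_nonsing_inv _ hIBAd, Matrix.one_mul]
  have hYH : ((1 - Bᴴ * A)⁻¹)ᴴ = (1 - Aᴴ * B)⁻¹ := by
    rw [Matrix.conjTranspose_nonsing_inv]
    congr 1
    simp [Matrix.conjTranspose_sub, Matrix.conjTranspose_mul, Matrix.conjTranspose_one]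
  have hSCS : S * ((1 - Bᴴ * B)⁻¹ * S) = 1 := by
    rw [← hS2, Matrix.mul_inv_rev, Matrix.mul_assoc S⁻¹ S⁻¹ S,
      Matrix.nonsing_inv_mul _ hSd, Matrix.mul_one, Matrix.mul_nonsing_inv _ hSd]
  have hGH : Gᴴ = S * ((1 - Aᴴ * B)⁻¹ * ((Aᴴ - Bᴴ) * T⁻¹)) := by
    rw [hG]
    simp only [Matrix.conjTranspose_mul, Matrix.conjTranspose_sub, Matrix.conjTranspose_nonsing_inv,
      hSH, hTH, hYH, Matrix.mul_assoc]
  have hGHG : Gᴴ * G = S * ((1 - Aᴴ * B)⁻¹ * ((Aᴴ - Bᴴ) *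
      ((1 - B * Bᴴ)⁻¹ * ((A - B) * ((1 - Bᴴ * A)⁻¹ * S))))) := by
    rw [hGH, hG, hTT]
    simp only [Matrix.mul_assoc]
  have key := key_identity A B hPd
  have main : 1 - Gᴴ * G
      = S * ((1 - Aᴴ * B)⁻¹ * ((1 - Aᴴ * A) * ((1 - Bᴴ * A)⁻¹ * S))) := by
    rw [hGHG, key]
    exact assemble S (1 - Aᴴ * B)⁻¹ (1 - Aᴴ * B) (1 - Bᴴ * A) (1 - Bᴴ * A)⁻¹
      (1 - Bᴴ * B)⁻¹ (Aᴴ - Bᴴ) (A - B) (1 - B * Bᴴ)⁻¹ hXI hYS hSCS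
  have hA1 : (1 - Aᴴ * A).PosSemidef := posSemidef_one_sub_of_norm_le A hA
  have psd : (S * ((1 - Aᴴ * B)⁻¹ * ((1 - Aᴴ * A) * ((1 - Bᴴ * A)⁻¹ * S)))).PosSemidef := by
    have h := hA1.conjTranspose_mul_mul_same ((1 - Bᴴ * A)⁻¹ * S)
    have e : S * ((1 - Aᴴ * B)⁻¹ * ((1 - Aᴴ * A) * ((1 - Bᴴ * A)⁻¹ * S)))
        = ((1 - Bᴴ * A)⁻¹ * S)ᴴ * (1 - Aᴴ * A) * ((1 - Bᴴ * A)⁻¹ * S) := by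
      simp only [Matrix.conjTranspose_mul, hSH, hYH, Matrix.mul_assoc]
    rw [e]
    exact h
  exact ⟨hIBA, hIAB, main, psd,
    l2_opNorm_le_one_of_posSemidef G (by rw [main]; exact psd)⟩
end
end

section
/- (Proposition 5.5: product formula for d_Δ.) Let Δ_1 be an s_1×r_1 matrix of holomorphic functions on an open set E_1 ⊆ ℂ^{d_1} and Δ_2 an s_2×r_2 matrix of holomorphic functions on an open set E_2 ⊆ ℂ^{d_2}, and define (Δ_1 ⊕ Δ_2)(z_1, z_2) as the block-diagonal matrix with blocks Δ_1(z_1) and Δ_2(z_2), so that B_{Δ_1⊕Δ_2} = B_{Δ_1} × B_{Δ_2}. Then for all (z_1, z_2), (w_1, w_2) ∈ B_{Δ_1} × B_{Δ_2}: d_{Δ_1⊕Δ_2}((z_1, z_2), (w_1, w_2)) = max{ d_{Δ_1}(z_1, w_1), d_{Δ_2}(z_2, w_2) }. -/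
open scoped Matrix.Norms.L2Operator ComplexOrder
open Matrix

noncomputable section

def eu {ι : Type*} (x : ι → ℂ) : EuclideanSpace ℂ ι := WithLp.toLp 2 x

@[simp] lemma eu_apply {ι : Type*} (x : ι → ℂ) (i : ι) : eu x i = x i := rfl

variable {m n p q : Type*} [Fintype m] [Fintype n] [Fintype p] [Fintype q]
  [DecidableEq m] [DecidableEq n] [DecidableEq p] [DecidableEq q]

lemma euclid_norm_sq {ι : Type*} [Fintype ι] (x : EuclideanSpace ℂ ι) :
    ‖x‖ ^ 2 = ∑ i, ‖x i‖ ^ 2 := by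
  rw [EuclideanSpace.norm_eq, Real.sq_sqrt (by positivity)]

lemma euclid_sum_sq (x : (n ⊕ q) → ℂ) :
    ‖eu x‖ ^ 2 = ‖eu (fun i => x (Sum.inl i))‖ ^ 2 + ‖eu (fun j => x (Sum.inr j))‖ ^ 2 := by
  rw [euclid_norm_sq, euclid_norm_sq, euclid_norm_sq]
  simp only [eu_apply]
  exact Fintype.sum_sum_type _

lemma l2norm_le [DecidableEq n] (A : Matrix m n ℂ) {C : ℝ} (hC : 0 ≤ C)
    (h : ∀ x : n → ℂ, ‖eu (A *ᵥ x)‖ ≤ C * ‖eu x‖) :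
    ‖A‖ ≤ C := by
  rw [Matrix.l2_opNorm_def]
  exact ContinuousLinearMap.opNorm_le_bound _ hC fun x => h x.ofLp

lemma l2norm_mulVec [DecidableEq n] (A : Matrix m n ℂ) (x : n → ℂ) :
    ‖eu (A *ᵥ x)‖ ≤ ‖A‖ * ‖eu x‖ :=
  Matrix.l2_opNorm_mulVec A (eu x)

lemma fromBlocks_mulVec_diag (A : Matrix m n ℂ) (D : Matrix p q ℂ) (x : (n ⊕ q) → ℂ) :
    Matrix.fromBlocks A 0 0 D *ᵥ x
      = Sum.elim (A *ᵥ fun i => x (Sum.inl i)) (D *ᵥ fun j => x (Sum.inr j)) := by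
  have hx : x = Sum.elim (fun i => x (Sum.inl i)) (fun j => x (Sum.inr j)) := by
    funext i; cases i <;> rfl
  rw [hx, Matrix.fromBlocks_mulVec]
  simp

lemma l2norm_fromBlocks [DecidableEq n] [DecidableEq q] (A : Matrix m n ℂ) (D : Matrix p q ℂ) :
    ‖Matrix.fromBlocks A 0 0 D‖ = max ‖A‖ ‖D‖ := by
  apply le_antisymm
  · apply l2norm_le _ (le_max_iff.2 (Or.inl (norm_nonneg A)))
    intro x
    set x₁ : n → ℂ := fun i => x (Sum.inl i)
    set x₂ : q → ℂ := fun j => x (Sum.inr j)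
    have key : ‖eu (Matrix.fromBlocks A 0 0 D *ᵥ x)‖ ^ 2 ≤ (max ‖A‖ ‖D‖ * ‖eu x‖) ^ 2 := by
      rw [euclid_sum_sq (Matrix.fromBlocks A 0 0 D *ᵥ x)]
      have h1 : (fun i => (Matrix.fromBlocks A 0 0 D *ᵥ x) (Sum.inl i)) = A *ᵥ x₁ := by
        rw [fromBlocks_mulVec_diag]; rfl
      have h2 : (fun j => (Matrix.fromBlocks A 0 0 D *ᵥ x) (Sum.inr j)) = D *ᵥ x₂ := by
        rw [fromBlocks_mulVec_diag]; rfl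
      rw [h1, h2]
      have b1 : ‖eu (A *ᵥ x₁)‖ ^ 2 ≤ (max ‖A‖ ‖D‖) ^ 2 * ‖eu x₁‖ ^ 2 := by
        have := l2norm_mulVec A x₁
        have h' : ‖eu (A *ᵥ x₁)‖ ≤ max ‖A‖ ‖D‖ * ‖eu x₁‖ :=
          this.trans (mul_le_mul_of_nonneg_right (le_max_left _ _) (norm_nonneg _))
        nlinarith [norm_nonneg (eu (A *ᵥ x₁))]
      have b2 : ‖eu (D *ᵥ x₂)‖ ^ 2 ≤ (max ‖A‖ ‖D‖) ^ 2 * ‖eu x₂‖ ^ 2 := by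
        have := l2norm_mulVec D x₂
        have h' : ‖eu (D *ᵥ x₂)‖ ≤ max ‖A‖ ‖D‖ * ‖eu x₂‖ :=
          this.trans (mul_le_mul_of_nonneg_right (le_max_right _ _) (norm_nonneg _))
        nlinarith [norm_nonneg (eu (D *ᵥ x₂))]
      have hx : ‖eu x‖ ^ 2 = ‖eu x₁‖ ^ 2 + ‖eu x₂‖ ^ 2 := euclid_sum_sq x
      rw [mul_pow, hx]
      ring_nf
      nlinarith [b1, b2]
    have h0 : (0:ℝ) ≤ max ‖A‖ ‖D‖ * ‖eu x‖ :=
      mul_nonneg (le_max_iff.2 (Or.inl (norm_nonneg A))) (norm_nonneg _)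
    nlinarith [norm_nonneg (eu (Matrix.fromBlocks A 0 0 D *ᵥ x)), key]
  · apply max_le
    · apply l2norm_le _ (norm_nonneg _)
      intro x₁
      have := l2norm_mulVec (Matrix.fromBlocks A 0 0 D) (Sum.elim x₁ (0 : q → ℂ))
      have hv : Matrix.fromBlocks A 0 0 D *ᵥ Sum.elim x₁ (0 : q → ℂ)
          = Sum.elim (A *ᵥ x₁) 0 := by
        rw [Matrix.fromBlocks_mulVec]; simp
      rw [hv] at this
      have e1 : ‖eu (Sum.elim (A *ᵥ x₁) (0 : p → ℂ))‖ ^ 2 = ‖eu (A *ᵥ x₁)‖ ^ 2 := by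
        rw [euclid_sum_sq]; simp [euclid_norm_sq]
      have e2 : ‖eu (Sum.elim x₁ (0 : q → ℂ))‖ ^ 2 = ‖eu x₁‖ ^ 2 := by
        rw [euclid_sum_sq]; simp [euclid_norm_sq]
      have e1' : ‖eu (Sum.elim (A *ᵥ x₁) (0 : p → ℂ))‖ = ‖eu (A *ᵥ x₁)‖ := by
        nlinarith [norm_nonneg (eu (Sum.elim (A *ᵥ x₁) (0 : p → ℂ))), norm_nonneg (eu (A *ᵥ x₁)), e1]
      have e2' : ‖eu (Sum.elim x₁ (0 : q → ℂ))‖ = ‖eu x₁‖ := by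
        nlinarith [norm_nonneg (eu (Sum.elim x₁ (0 : q → ℂ))), norm_nonneg (eu x₁), e2]
      rw [e1', e2'] at this
      exact this
    · apply l2norm_le _ (norm_nonneg _)
      intro x₂
      have := l2norm_mulVec (Matrix.fromBlocks A 0 0 D) (Sum.elim (0 : n → ℂ) x₂)
      have hv : Matrix.fromBlocks A 0 0 D *ᵥ Sum.elim (0 : n → ℂ) x₂
          = Sum.elim (0 : m → ℂ) (D *ᵥ x₂) := by
        rw [Matrix.fromBlocks_mulVec]; simp
      rw [hv] at this
      have e1 : ‖eu (Sum.elim (0 : m → ℂ) (D *ᵥ x₂))‖ ^ 2 = ‖eu (D *ᵥ x₂)‖ ^ 2 := by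
        rw [euclid_sum_sq]; simp [euclid_norm_sq]
      have e2 : ‖eu (Sum.elim (0 : n → ℂ) x₂)‖ ^ 2 = ‖eu x₂‖ ^ 2 := by
        rw [euclid_sum_sq]; simp [euclid_norm_sq]
      have e1' : ‖eu (Sum.elim (0 : m → ℂ) (D *ᵥ x₂))‖ = ‖eu (D *ᵥ x₂)‖ := by
        nlinarith [norm_nonneg (eu (Sum.elim (0 : m → ℂ) (D *ᵥ x₂))), norm_nonneg (eu (D *ᵥ x₂)), e1]
      have e2' : ‖eu (Sum.elim (0 : n → ℂ) x₂)‖ = ‖eu x₂‖ := by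
        nlinarith [norm_nonneg (eu (Sum.elim (0 : n → ℂ) x₂)), norm_nonneg (eu x₂), e2]
      rw [e1', e2'] at this
      exact this

lemma dotProduct_star_self (v : n → ℂ) : dotProduct (star v) v = ((‖eu v‖ ^ 2 : ℝ) : ℂ) := by
  rw [euclid_norm_sq]
  push_cast
  simp only [dotProduct, Pi.star_apply, eu_apply]
  congr 1
  funext i
  rw [RCLike.star_def, Complex.conj_mul']

lemma posSemidef_one_sub_conjTranspose_mul_self [DecidableEq n] [DecidableEq m]
    (A : Matrix m n ℂ) (h : ‖A‖ ≤ 1) : (1 - Aᴴ * A).PosSemidef := by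
  refine Matrix.PosSemidef.of_dotProduct_mulVec_nonneg ?_ ?_
  · simp [Matrix.IsHermitian, Matrix.conjTranspose_sub, Matrix.conjTranspose_mul]
  · intro x
    have key : dotProduct (star x) ((1 - Aᴴ * A) *ᵥ x)
        = ((‖eu x‖ ^ 2 - ‖eu (A *ᵥ x)‖ ^ 2 : ℝ) : ℂ) := by
      rw [Matrix.sub_mulVec, dotProduct_sub, Matrix.one_mulVec]
      rw [← Matrix.mulVec_mulVec, Matrix.dotProduct_mulVec (star x) Aᴴ]
      rw [← Matrix.star_mulVec]
      rw [dotProduct_star_self, dotProduct_star_self]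
      push_cast
      ring
    rw [key]
    have hAx : ‖eu (A *ᵥ x)‖ ≤ ‖eu x‖ := by
      have := l2norm_mulVec A x
      nlinarith [norm_nonneg (eu x)]
    have : (0:ℝ) ≤ ‖eu x‖ ^ 2 - ‖eu (A *ᵥ x)‖ ^ 2 := by
      nlinarith [norm_nonneg (eu (A *ᵥ x))]
    exact_mod_cast Complex.zero_le_real.2 this

lemma posSemidef_fromBlocks {P : Matrix n n ℂ} {Q : Matrix q q ℂ}
    (hP : P.PosSemidef) (hQ : Q.PosSemidef) : (Matrix.fromBlocks P 0 0 Q).PosSemidef := by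
  refine Matrix.PosSemidef.of_dotProduct_mulVec_nonneg ?_ ?_
  · show _ = _
    rw [Matrix.fromBlocks_conjTranspose]
    simp [hP.1.eq, hQ.1.eq]
  · intro x
    set x₁ : n → ℂ := fun i => x (Sum.inl i)
    set x₂ : q → ℂ := fun j => x (Sum.inr j)
    have hmu : Matrix.fromBlocks P 0 0 Q *ᵥ x = Sum.elim (P *ᵥ x₁) (Q *ᵥ x₂) :=
      fromBlocks_mulVec_diag P Q x
    rw [hmu]
    have : dotProduct (star x) (Sum.elim (P *ᵥ x₁) (Q *ᵥ x₂))
        = dotProduct (star x₁) (P *ᵥ x₁) + dotProduct (star x₂) (Q *ᵥ x₂) := by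
      simp only [dotProduct, Fintype.sum_sum_type, Pi.star_apply, Sum.elim_inl, Sum.elim_inr]
      rfl
    rw [this]
    exact add_nonneg (hP.dotProduct_mulVec_nonneg x₁) (hQ.dotProduct_mulVec_nonneg x₂)

open scoped MatrixOrder in
lemma msqrt_eq_cfcSqrt {P : Matrix n n ℂ} (hP : P.PosSemidef) : msqrt P = CFC.sqrt P := by
  classical
  rw [msqrt, dif_pos hP, CFC.sqrt_eq_cfc, cfc_nnreal_eq_real _ P (Matrix.nonneg_iff_posSemidef.2 hP),
    hP.1.cfc_eq]
  simp only [IsHermitian.cfc, Unitary.conjStarAlgAut_apply]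
  congr 3
  funext i
  simp [hP.eigenvalues_nonneg i]

open scoped MatrixOrder in
lemma msqrt_fromBlocks {P : Matrix n n ℂ} {Q : Matrix q q ℂ} [DecidableEq n] [DecidableEq q]
    (hP : P.PosSemidef) (hQ : Q.PosSemidef) :
    msqrt (Matrix.fromBlocks P 0 0 Q) = Matrix.fromBlocks (msqrt P) 0 0 (msqrt Q) := by
  classical
  have hFB : (Matrix.fromBlocks P 0 0 Q).PosSemidef := posSemidef_fromBlocks hP hQ
  rw [msqrt_eq_cfcSqrt hFB, msqrt_eq_cfcSqrt hP, msqrt_eq_cfcSqrt hQ]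
  refine CFC.sqrt_unique ?_ (Matrix.nonneg_iff_posSemidef.2 (posSemidef_fromBlocks
    (Matrix.nonneg_iff_posSemidef.1 (CFC.sqrt_nonneg P)) (Matrix.nonneg_iff_posSemidef.1 (CFC.sqrt_nonneg Q))))
  rw [Matrix.fromBlocks_multiply]
  simp [CFC.sqrt_mul_sqrt_self P (Matrix.nonneg_iff_posSemidef.2 hP),
    CFC.sqrt_mul_sqrt_self Q (Matrix.nonneg_iff_posSemidef.2 hQ)]

lemma inv_fromBlocks {P : Matrix n n ℂ} {Q : Matrix q q ℂ} [DecidableEq n] [DecidableEq q]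
    (hP : IsUnit P.det) (hQ : IsUnit Q.det) :
    (Matrix.fromBlocks P 0 0 Q)⁻¹ = Matrix.fromBlocks P⁻¹ 0 0 Q⁻¹ := by
  apply Matrix.inv_eq_right_inv
  rw [Matrix.fromBlocks_multiply]
  simp [Matrix.mul_nonsing_inv _ hP, Matrix.mul_nonsing_inv _ hQ, Matrix.fromBlocks_one]

lemma isUnit_det_one_sub {X : Matrix n n ℂ} [DecidableEq n] (h : ‖X‖ < 1) :
    IsUnit (1 - X).det :=
  (Matrix.isUnit_iff_isUnit_det _).mp (Units.oneSub X h).isUnit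

lemma isUnit_det_msqrt {P : Matrix n n ℂ} [DecidableEq n] (hP : P.PosSemidef)
    (h : IsUnit P.det) : IsUnit (msqrt P).det := by
  classical
  have hm : msqrt P * msqrt P = P := by
    open scoped MatrixOrder in
    rw [msqrt_eq_cfcSqrt hP]; exact CFC.sqrt_mul_sqrt_self P (Matrix.nonneg_iff_posSemidef.2 hP)
  rw [← hm, Matrix.det_mul] at h
  exact isUnit_of_mul_isUnit_left h

lemma fromBlocks_sub' {α : Type*} [Sub α] {l o : Type*} (A A' : Matrix n l α) (B B' : Matrix n m α)
    (C C' : Matrix o l α) (D D' : Matrix o m α) :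
    Matrix.fromBlocks A B C D - Matrix.fromBlocks A' B' C' D'
      = Matrix.fromBlocks (A - A') (B - B') (C - C') (D - D') := by
  ext i j
  cases i <;> cases j <;> rfl

lemma mul_norm_lt {X : Matrix m n ℂ} {Y : Matrix n p ℂ} (hx : ‖X‖ < 1) (hy : ‖Y‖ < 1) :
    ‖X * Y‖ < 1 :=
  (Matrix.l2_opNorm_mul X Y).trans_lt (by nlinarith [norm_nonneg X, norm_nonneg Y])

/-- **Proposition 5.5 (product formula)**:
`d_{Δ₁⊕Δ₂}((z₁,z₂),(w₁,w₂)) = max (d_{Δ₁}(z₁,w₁)) (d_{Δ₂}(z₂,w₂))`. -/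
theorem dDelta_prod {d₁ d₂ s₁ r₁ s₂ r₂ : ℕ}
    (E₁ : Set (Fin d₁ → ℂ)) (E₂ : Set (Fin d₂ → ℂ)) (hE₁ : IsOpen E₁) (hE₂ : IsOpen E₂)
    (Δ₁ : (Fin d₁ → ℂ) → Matrix (Fin s₁) (Fin r₁) ℂ)
    (Δ₂ : (Fin d₂ → ℂ) → Matrix (Fin s₂) (Fin r₂) ℂ)
    (hΔ₁ : ∀ p q, DifferentiableOn ℂ (fun ζ => Δ₁ ζ p q) E₁)
    (hΔ₂ : ∀ p q, DifferentiableOn ℂ (fun ζ => Δ₂ ζ p q) E₂)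
    (z₁ w₁ : Fin d₁ → ℂ) (z₂ w₂ : Fin d₂ → ℂ)
    (hz₁ : z₁ ∈ BDelta E₁ Δ₁) (hw₁ : w₁ ∈ BDelta E₁ Δ₁)
    (hz₂ : z₂ ∈ BDelta E₂ Δ₂) (hw₂ : w₂ ∈ BDelta E₂ Δ₂) :
    dDelta (fun p : (Fin d₁ → ℂ) × (Fin d₂ → ℂ) =>
        Matrix.fromBlocks (Δ₁ p.1) 0 0 (Δ₂ p.2)) (z₁, z₂) (w₁, w₂) =
      max (dDelta Δ₁ z₁ w₁) (dDelta Δ₂ z₂ w₂) := by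
  have hA : ‖Δ₁ z₁‖ < 1 := hz₁.2
  have hA' : ‖Δ₁ w₁‖ < 1 := hw₁.2
  have hB : ‖Δ₂ z₂‖ < 1 := hz₂.2
  have hB' : ‖Δ₂ w₂‖ < 1 := hw₂.2
  have hA'T : ‖(Δ₁ w₁)ᴴ‖ < 1 := by rwa [Matrix.l2_opNorm_conjTranspose]
  have hB'T : ‖(Δ₂ w₂)ᴴ‖ < 1 := by rwa [Matrix.l2_opNorm_conjTranspose]
  -- positive semidefiniteness
  have hP1 : (1 - Δ₁ w₁ * (Δ₁ w₁)ᴴ).PosSemidef := by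
    simpa using posSemidef_one_sub_conjTranspose_mul_self (Δ₁ w₁)ᴴ hA'T.le
  have hQ1 : (1 - Δ₂ w₂ * (Δ₂ w₂)ᴴ).PosSemidef := by
    simpa using posSemidef_one_sub_conjTranspose_mul_self (Δ₂ w₂)ᴴ hB'T.le
  have hP2 : (1 - (Δ₁ w₁)ᴴ * Δ₁ w₁).PosSemidef :=
    posSemidef_one_sub_conjTranspose_mul_self (Δ₁ w₁) hA'.le
  have hQ2 : (1 - (Δ₂ w₂)ᴴ * Δ₂ w₂).PosSemidef :=
    posSemidef_one_sub_conjTranspose_mul_self (Δ₂ w₂) hB'.le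
  -- invertibility
  have uS1 : IsUnit (msqrt (1 - Δ₁ w₁ * (Δ₁ w₁)ᴴ)).det :=
    isUnit_det_msqrt hP1 (isUnit_det_one_sub (mul_norm_lt hA' hA'T))
  have uS2 : IsUnit (msqrt (1 - Δ₂ w₂ * (Δ₂ w₂)ᴴ)).det :=
    isUnit_det_msqrt hQ1 (isUnit_det_one_sub (mul_norm_lt hB' hB'T))
  have uM1 : IsUnit (1 - (Δ₁ w₁)ᴴ * Δ₁ z₁).det := isUnit_det_one_sub (mul_norm_lt hA'T hA)
  have uM2 : IsUnit (1 - (Δ₂ w₂)ᴴ * Δ₂ z₂).det := isUnit_det_one_sub (mul_norm_lt hB'T hB)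
  -- block identities
  have E1 : (1 : Matrix (Fin s₁ ⊕ Fin s₂) (Fin s₁ ⊕ Fin s₂) ℂ)
        - Matrix.fromBlocks (Δ₁ w₁) 0 0 (Δ₂ w₂) * (Matrix.fromBlocks (Δ₁ w₁) 0 0 (Δ₂ w₂))ᴴ
      = Matrix.fromBlocks (1 - Δ₁ w₁ * (Δ₁ w₁)ᴴ) 0 0 (1 - Δ₂ w₂ * (Δ₂ w₂)ᴴ) := by
    rw [Matrix.fromBlocks_conjTranspose, Matrix.fromBlocks_multiply, ← Matrix.fromBlocks_one,
      fromBlocks_sub']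
    simp
  have E2 : Matrix.fromBlocks (Δ₁ z₁) 0 0 (Δ₂ z₂) - Matrix.fromBlocks (Δ₁ w₁) 0 0 (Δ₂ w₂)
      = Matrix.fromBlocks (Δ₁ z₁ - Δ₁ w₁) 0 0 (Δ₂ z₂ - Δ₂ w₂) := by
    rw [fromBlocks_sub']; simp
  have E3 : (1 : Matrix (Fin r₁ ⊕ Fin r₂) (Fin r₁ ⊕ Fin r₂) ℂ)
        - (Matrix.fromBlocks (Δ₁ w₁) 0 0 (Δ₂ w₂))ᴴ * Matrix.fromBlocks (Δ₁ z₁) 0 0 (Δ₂ z₂)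
      = Matrix.fromBlocks (1 - (Δ₁ w₁)ᴴ * Δ₁ z₁) 0 0 (1 - (Δ₂ w₂)ᴴ * Δ₂ z₂) := by
    rw [Matrix.fromBlocks_conjTranspose, Matrix.fromBlocks_multiply, ← Matrix.fromBlocks_one,
      fromBlocks_sub']
    simp
  have E4 : (1 : Matrix (Fin r₁ ⊕ Fin r₂) (Fin r₁ ⊕ Fin r₂) ℂ)
        - (Matrix.fromBlocks (Δ₁ w₁) 0 0 (Δ₂ w₂))ᴴ * Matrix.fromBlocks (Δ₁ w₁) 0 0 (Δ₂ w₂)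
      = Matrix.fromBlocks (1 - (Δ₁ w₁)ᴴ * Δ₁ w₁) 0 0 (1 - (Δ₂ w₂)ᴴ * Δ₂ w₂) := by
    rw [Matrix.fromBlocks_conjTranspose, Matrix.fromBlocks_multiply, ← Matrix.fromBlocks_one,
      fromBlocks_sub']
    simp
  simp only [dDelta]
  rw [E1, E2, E3, E4, msqrt_fromBlocks hP1 hQ1, msqrt_fromBlocks hP2 hQ2,
    inv_fromBlocks uS1 uS2, inv_fromBlocks uM1 uM2, Matrix.fromBlocks_multiply,
    Matrix.fromBlocks_multiply, Matrix.fromBlocks_multiply]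
  simp only [Matrix.zero_mul, Matrix.mul_zero, add_zero, zero_add]
  rw [l2norm_fromBlocks]
end
end
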